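/- Let X and Z be Banach spaces and T : X → Z a one-to-one bounded linear operator with adjoint T* : Z* → X*. The following are equivalent: (i) T*(Z*) is not a σ-porous subset of X*; (ii) there exists α > 0 such that α‖x‖_X ≤ ‖T(x)‖_Z for all x ∈ X; (iii) T* is surjective. -/

import Mathlib

open Filter

/-- `A` is a porous subset of the metric space `α` with porosity constant `c`. -/
def Porous {α : Type*} [PseudoMetricSpace α] (A : Set α) (c : ℝ) : Prop :=
  ∀ a ∈ A, ∃ y : ℕ → α, Tendsto y atTop (nhds a) ∧
    ∀ n, Metric.closedBall (y n) (c * dist (y n) a) ∩ A = ∅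

/-- `A` is σ-porous: a countable union of porous sets. -/
def SigmaPorous {α : Type*} [PseudoMetricSpace α] (A : Set α) : Prop :=
  ∃ P : ℕ → Set α, (∀ n, ∃ c : ℝ, 0 < c ∧ c < 1 ∧ Porous (P n) c) ∧ A = ⋃ n, P n


lemma not_sigmaPorous_univ {α : Type*} [MetricSpace α] [CompleteSpace α] [Nonempty α] :
    ¬ SigmaPorous (Set.univ : Set α) := by
  rintro ⟨P, hP, hU⟩
  obtain ⟨n, x, hx⟩ := nonempty_interior_of_iUnion_of_closed
    (f := fun n => closure (P n)) (fun n => isClosed_closure)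
    (Set.eq_univ_of_univ_subset (hU ▸ Set.iUnion_mono fun n => subset_closure))
  obtain ⟨r, hr, hball⟩ := Metric.mem_nhds_iff.1 (mem_interior_iff_mem_nhds.1 hx)
  have hxc : x ∈ closure (P n) := interior_subset hx
  obtain ⟨a, haP, hax⟩ := Metric.mem_closure_iff.1 hxc (r / 2) (by linarith)
  obtain ⟨c, hc0, hc1, hpor⟩ := hP n
  obtain ⟨y, hy, hdis⟩ := hpor a haP
  obtain ⟨N, hN⟩ := Metric.tendsto_atTop.1 hy (r / 4) (by linarith)
  have hk : dist (y N) a < r / 4 := hN N le_rfl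
  have hd0 : 0 < dist (y N) a := by
    rcases (dist_nonneg : (0:ℝ) ≤ dist (y N) a).lt_or_eq with h | h
    · exact h
    · exfalso
      have hya : y N = a := dist_eq_zero.1 h.symm
      have : a ∈ Metric.closedBall (y N) (c * dist (y N) a) ∩ P n :=
        ⟨by simp [hya], haP⟩
      simp [hdis N] at this
  have hyx : y N ∈ Metric.ball x r := by
    rw [Metric.mem_ball]
    calc dist (y N) x ≤ dist (y N) a + dist a x := dist_triangle _ _ _
      _ < r / 4 + r / 2 := by
          have := dist_comm x a ▸ hax
          linarith
      _ < r := by linarith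
  have hyc : y N ∈ closure (P n) := hball hyx
  obtain ⟨b, hbP, hb⟩ := Metric.mem_closure_iff.1 hyc (c * dist (y N) a)
    (mul_pos hc0 hd0)
  have : b ∈ Metric.closedBall (y N) (c * dist (y N) a) ∩ P n :=
    ⟨Metric.mem_closedBall.2 (by rw [dist_comm]; exact hb.le), hbP⟩
  simp [hdis N] at this

open NormedSpace in
lemma l1 {X Z : Type*} [NormedAddCommGroup X] [NormedSpace ℝ X]
    [NormedAddCommGroup Z] [NormedSpace ℝ Z]
    (T : X →L[ℝ] Z) (hT : Function.Injective T)
    (h : ∃ α : ℝ, 0 < α ∧ ∀ x, α * ‖x‖ ≤ ‖T x‖) :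
    Function.Surjective fun z' : StrongDual ℝ Z => z'.comp T := by
  obtain ⟨α, hα, hb⟩ := h
  intro φ
  have hT' : Function.Injective (T : X →ₗ[ℝ] Z) := hT
  let e : X ≃ₗ[ℝ] LinearMap.range (T : X →ₗ[ℝ] Z) := LinearEquiv.ofInjective _ hT'
  have he : ∀ x : X, ((e x : LinearMap.range (T : X →ₗ[ℝ] Z)) : Z) = T x :=
    fun x => rfl
  let g : LinearMap.range (T : X →ₗ[ℝ] Z) →ₗ[ℝ] ℝ :=
    φ.toLinearMap ∘ₗ e.symm.toLinearMap
  have hgb : ∀ y, ‖g y‖ ≤ (‖φ‖ * α⁻¹) * ‖y‖ := by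
    intro y
    have h1 : ‖g y‖ ≤ ‖φ‖ * ‖e.symm y‖ := φ.le_opNorm _
    have h2 : α * ‖e.symm y‖ ≤ ‖T (e.symm y)‖ := hb _
    have h3 : T (e.symm y) = (y : Z) := by
      conv_rhs => rw [← e.apply_symm_apply y]
      exact (he _).symm
    rw [h3] at h2
    have h4 : ‖e.symm y‖ ≤ α⁻¹ * ‖y‖ := by
      rw [le_inv_mul_iff₀ hα]
      exact h2
    calc ‖g y‖ ≤ ‖φ‖ * ‖e.symm y‖ := h1
      _ ≤ ‖φ‖ * (α⁻¹ * ‖y‖) := by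
          exact mul_le_mul_of_nonneg_left h4 (norm_nonneg _)
      _ = (‖φ‖ * α⁻¹) * ‖y‖ := by ring
  let f : LinearMap.range (T : X →ₗ[ℝ] Z) →L[ℝ] ℝ := g.mkContinuous _ hgb
  obtain ⟨g', hg', -⟩ := exists_extension_norm_eq (LinearMap.range (T : X →ₗ[ℝ] Z)) f
  refine ⟨g', ?_⟩
  ext x
  have hm : T x ∈ LinearMap.range (T : X →ₗ[ℝ] Z) := ⟨x, rfl⟩
  have : g' (T x) = f ⟨T x, hm⟩ := hg' ⟨T x, hm⟩
  simp only [ContinuousLinearMap.comp_apply, this]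
  show f ⟨T x, hm⟩ = φ x
  have hex : (⟨T x, hm⟩ : LinearMap.range (T : X →ₗ[ℝ] Z)) = e x := by
    ext; exact (he x).symm
  show φ (e.symm ⟨T x, hm⟩) = φ x
  rw [hex, e.symm_apply_apply]


open NormedSpace Metric in
lemma l3 {X Z : Type*} [NormedAddCommGroup X] [NormedSpace ℝ X]
    [NormedAddCommGroup Z] [NormedSpace ℝ Z]
    (T : X →L[ℝ] Z)
    (h : ¬ ∃ α : ℝ, 0 < α ∧ ∀ x, α * ‖x‖ ≤ ‖T x‖) :
    SigmaPorous (Set.range fun z' : StrongDual ℝ Z => z'.comp T) := by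
  push_neg at h
  have key : ∀ α : ℝ, 0 < α → ∃ x : X, ‖x‖ = 1 ∧ ‖T x‖ < α := by
    intro α hα
    obtain ⟨x, hx⟩ := h α hα
    have hx0 : x ≠ 0 := by
      rintro rfl
      simp at hx
    have hnx : (0:ℝ) < ‖x‖ := norm_pos_iff.2 hx0
    refine ⟨‖x‖⁻¹ • x, ?_, ?_⟩
    · rw [norm_smul, norm_inv, norm_norm, inv_mul_cancel₀ hnx.ne']
    · rw [map_smul, norm_smul, norm_inv, norm_norm]
      rw [inv_mul_lt_iff₀ hnx]
      linarith [hx]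
  refine ⟨fun n => (fun z' : StrongDual ℝ Z => z'.comp T) '' Metric.closedBall 0 (n + 1),
    fun n => ⟨1/2, by norm_num, by norm_num, ?_⟩, ?_⟩
  · rintro a ⟨z', hz', rfl⟩
    rw [mem_closedBall_zero_iff] at hz'
    have hsel : ∀ k : ℕ, ∃ x : X, ∃ u : StrongDual ℝ X, ‖x‖ = 1 ∧ ‖u‖ = 1 ∧ u x = 1 ∧
        ‖T x‖ < (1 / (k + 1)) / (8 * (n + 1)) := by
      intro k
      have hpos : (0:ℝ) < (1 / (k + 1)) / (8 * (n + 1)) := by positivity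
      obtain ⟨x, hx1, hxT⟩ := key _ hpos
      have hx0 : x ≠ 0 := by intro hh; rw [hh] at hx1; simp at hx1
      obtain ⟨u, hu1, hux⟩ := exists_dual_vector ℝ x (norm_ne_zero_iff.2 hx0)
      exact ⟨x, u, hx1, hu1, by rw [hux, hx1]; norm_num, hxT⟩
    choose x u hx1 hu1 hux hTx using hsel
    set εf : ℕ → ℝ := fun k => 1 / (k + 1) with hεf
    have hεpos : ∀ k, 0 < εf k := by intro k; positivity
    refine ⟨fun k => z'.comp T + εf k • u k, ?_, ?_⟩
    · have hdist : ∀ k, dist (z'.comp T + εf k • u k) (z'.comp T) = εf k := by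
        intro k
        rw [dist_eq_norm, add_sub_cancel_left, norm_smul, hu1, mul_one,
          Real.norm_eq_abs, abs_of_pos (hεpos k)]
      rw [tendsto_iff_dist_tendsto_zero]
      simp only [hdist]
      exact tendsto_one_div_add_atTop_nhds_zero_nat
    · intro k
      rw [Set.eq_empty_iff_forall_notMem]
      rintro w ⟨hw1, v', hv', rfl⟩
      rw [mem_closedBall_zero_iff] at hv'
      rw [Metric.mem_closedBall] at hw1
      have hdist : dist (z'.comp T + εf k • u k) (z'.comp T) = εf k := by
        rw [dist_eq_norm, add_sub_cancel_left, norm_smul, hu1, mul_one,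
          Real.norm_eq_abs, abs_of_pos (hεpos k)]
      rw [hdist] at hw1
      -- evaluate at x k
      set ε := εf k with hε
      have hεk : 0 < ε := hεpos k
      have heval : |(v'.comp T) (x k) - (z'.comp T + ε • u k) (x k)| ≤ ε / 2 := by
        have h1 : |(v'.comp T - (z'.comp T + ε • u k)) (x k)| ≤
            ‖v'.comp T - (z'.comp T + ε • u k)‖ * ‖x k‖ :=
          (v'.comp T - (z'.comp T + ε • u k)).le_opNorm _
        rw [hx1, mul_one] at h1
        have h2 : ‖v'.comp T - (z'.comp T + ε • u k)‖ ≤ ε / 2 := by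
          rw [← dist_eq_norm]
          calc dist (v'.comp T) (z'.comp T + ε • u k) ≤ 1 / 2 * ε := hw1
            _ = ε / 2 := by ring
        calc |(v'.comp T) (x k) - (z'.comp T + ε • u k) (x k)|
            = |(v'.comp T - (z'.comp T + ε • u k)) (x k)| := by
              simp [ContinuousLinearMap.sub_apply]
          _ ≤ ε / 2 := h1.trans h2
      have hexp : (z'.comp T + ε • u k) (x k) = z' (T (x k)) + ε := by
        simp [ContinuousLinearMap.add_apply, ContinuousLinearMap.smul_apply, hux k]
      have hA : |z' (T (x k))| ≤ ε / 8 := by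
        calc |z' (T (x k))| ≤ ‖z'‖ * ‖T (x k)‖ := z'.le_opNorm _
          _ ≤ (n + 1) * (ε / (8 * (n + 1))) := by
              apply mul_le_mul hz' (hTx k).le (norm_nonneg _) (by positivity)
          _ = ε / 8 := by field_simp
      have hB : |v' (T (x k))| ≤ ε / 8 := by
        calc |v' (T (x k))| ≤ ‖v'‖ * ‖T (x k)‖ := v'.le_opNorm _
          _ ≤ (n + 1) * (ε / (8 * (n + 1))) := by
              apply mul_le_mul hv' (hTx k).le (norm_nonneg _) (by positivity)
          _ = ε / 8 := by field_simp
      rw [hexp] at heval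
      have h1 := abs_le.1 heval
      have h2 := abs_le.1 hA
      have h3 := abs_le.1 hB
      have : (v'.comp T) (x k) = v' (T (x k)) := rfl
      rw [this] at h1
      linarith [h1.1, h1.2, h2.1, h2.2, h3.1, h3.2, hεk]
  · ext ψ
    simp only [Set.mem_range, Set.mem_iUnion, Set.mem_image]
    constructor
    · rintro ⟨z', rfl⟩
      refine ⟨⌈‖z'‖⌉₊, z', ?_, rfl⟩
      rw [mem_closedBall_zero_iff]
      calc ‖z'‖ ≤ ⌈‖z'‖⌉₊ := Nat.le_ceil _
        _ ≤ (⌈‖z'‖⌉₊ : ℝ) + 1 := by linarith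
    · rintro ⟨m, z', -, rfl⟩
      exact ⟨z', rfl⟩

open NormedSpace in
theorem stmt5 {X Z : Type*} [NormedAddCommGroup X] [NormedSpace ℝ X] [CompleteSpace X]
    [NormedAddCommGroup Z] [NormedSpace ℝ Z] [CompleteSpace Z]
    (T : X →L[ℝ] Z) (hT : Function.Injective T) :
    (¬ SigmaPorous (Set.range fun z' : StrongDual ℝ Z => z'.comp T) ↔
        ∃ α : ℝ, 0 < α ∧ ∀ x, α * ‖x‖ ≤ ‖T x‖) ∧
    (¬ SigmaPorous (Set.range fun z' : StrongDual ℝ Z => z'.comp T) ↔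
        Function.Surjective fun z' : StrongDual ℝ Z => z'.comp T) := by
  have h31 : ¬ SigmaPorous (Set.range fun z' : StrongDual ℝ Z => z'.comp T) →
      ∃ α : ℝ, 0 < α ∧ ∀ x, α * ‖x‖ ≤ ‖T x‖ :=
    fun hns => by_contra fun hc => hns (l3 T hc)
  have h2 : (Function.Surjective fun z' : StrongDual ℝ Z => z'.comp T) →
      ¬ SigmaPorous (Set.range fun z' : StrongDual ℝ Z => z'.comp T) := by
    intro hs hsp
    rw [hs.range_eq] at hsp
    exact not_sigmaPorous_univ hsp
  exact ⟨⟨h31, fun hii => h2 (l1 T hT hii)⟩, ⟨fun hns => l1 T hT (h31 hns), h2⟩⟩
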